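/- arXiv:math-ph/0512046 — 2 statements merged into one kernel-verified Lean document; each statement's English description precedes it below -/
import Mathlib

section
/- For dimension n = p + q > 2, every conformal Killing factor κ on an open connected subset of ℝ^n (i.e., a twice differentiable function satisfying (n−2)∂_μ∂_ν κ + g_{μν} Δ_g κ = 0 for all μ, ν) is an affine function: κ(x) = α_ν x^ν + λ for constants α_ν, λ ∈ ℝ. -/
/-- A continuous linear functional on `Fin n → ℝ` vanishing on the canonical
basis vectors is zero. -/
lemma clm_ext_single {n : ℕ} (L M : (Fin n → ℝ) →L[ℝ] ℝ)
    (h : ∀ i, L (Pi.single i 1) = M (Pi.single i 1)) : L = M := by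
  ext u
  have hL := LinearMap.pi_apply_eq_sum_univ (L : (Fin n → ℝ) →ₗ[ℝ] ℝ) u
  have hM := LinearMap.pi_apply_eq_sum_univ (M : (Fin n → ℝ) →ₗ[ℝ] ℝ) u
  have hsingle : ∀ i : Fin n, (fun j => if i = j then (1:ℝ) else 0) = Pi.single i 1 := by
    intro i; funext j; simp [Pi.single_apply, eq_comm]
  simp only [ContinuousLinearMap.coe_coe] at hL hM
  rw [hL, hM]
  refine Finset.sum_congr rfl fun i _ => ?_
  rw [hsingle i, h i]

/-- For n = p + q > 2, every conformal Killing factor κ on an open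
connected subset of ℝ^n (twice differentiable, satisfying
(n−2)∂_μ∂_ν κ + g_{μν} Δ_g κ = 0) is affine: κ(x) = α_ν x^ν + λ. -/
theorem conformal_killing_factor_affine
    (p q n : ℕ) (hn : n = p + q) (hdim : 2 < n)
    (U : Set (Fin n → ℝ)) (hU : IsOpen U) (hUconn : IsConnected U)
    (g : Fin n → Fin n → ℝ)
    (hg : ∀ μ ν, g μ ν = if μ = ν then (if (μ : ℕ) < p then (1 : ℝ) else -1) else 0)
    (κ : (Fin n → ℝ) → ℝ) (hκ : ContDiffOn ℝ 2 κ U)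
    (hPDE : ∀ x ∈ U, ∀ μ ν : Fin n,
      ((n : ℝ) - 2) *
          fderiv ℝ (fun y => fderiv ℝ κ y (Pi.single ν 1)) x (Pi.single μ 1)
        + g μ ν *
          (∑ α : Fin n, g α α *
            fderiv ℝ (fun y => fderiv ℝ κ y (Pi.single α 1)) x (Pi.single α 1)) = 0) :
    ∃ (a : Fin n → ℝ) (lam : ℝ), ∀ x ∈ U, κ x = (∑ ν, a ν * x ν) + lam := by
  have hn2 : ((n : ℝ) - 2) ≠ 0 := by
    have : (2 : ℝ) < (n : ℝ) := by exact_mod_cast hdim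
    linarith
  have hgsq : ∀ β : Fin n, g β β * g β β = 1 := by
    intro β; simp only [hg, if_pos rfl]; split_ifs <;> norm_num
  -- Step 1 : all Hessian entries vanish on U
  have hHzero : ∀ x ∈ U, ∀ μ ν : Fin n,
      fderiv ℝ (fun y => fderiv ℝ κ y (Pi.single ν 1)) x (Pi.single μ 1) = 0 := by
    intro x hx μ ν
    set T : ℝ := ∑ α : Fin n, g α α *
        fderiv ℝ (fun y => fderiv ℝ κ y (Pi.single α 1)) x (Pi.single α 1) with hT
    have hTzero : T = 0 := by
      have h1 : ∀ β : Fin n,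
          g β β * (((n : ℝ) - 2) *
            fderiv ℝ (fun y => fderiv ℝ κ y (Pi.single β 1)) x (Pi.single β 1)
            + g β β * T) = 0 := fun β => by rw [hPDE x hx β β, mul_zero]
      have h2 : ∑ β : Fin n,
          g β β * (((n : ℝ) - 2) *
            fderiv ℝ (fun y => fderiv ℝ κ y (Pi.single β 1)) x (Pi.single β 1)
            + g β β * T) = 0 := Finset.sum_eq_zero fun β _ => h1 β
      have h3 : ∑ β : Fin n,
          g β β * (((n : ℝ) - 2) *
            fderiv ℝ (fun y => fderiv ℝ κ y (Pi.single β 1)) x (Pi.single β 1)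
            + g β β * T)
          = ((n : ℝ) - 2) * T + (n : ℝ) * T := by
        simp only [mul_add]
        rw [Finset.sum_add_distrib]
        congr 1
        · rw [hT, Finset.mul_sum]
          exact Finset.sum_congr rfl fun β _ => by ring
        · have h4 : ∀ β : Fin n, g β β * (g β β * T) = T := fun β => by
            rw [← mul_assoc, hgsq β, one_mul]
          rw [Finset.sum_congr rfl fun β _ => h4 β, Finset.sum_const,
            Finset.card_univ, Fintype.card_fin, nsmul_eq_mul]
      rw [h3] at h2
      have hcoef : ((n : ℝ) - 2) + (n : ℝ) ≠ 0 := by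
        have : (2 : ℝ) < (n : ℝ) := by exact_mod_cast hdim
        linarith
      have : (((n : ℝ) - 2) + (n : ℝ)) * T = 0 := by linarith
      exact (mul_eq_zero.mp this).resolve_left hcoef
    have h5 := hPDE x hx μ ν
    rw [← hT, hTzero, mul_zero, add_zero] at h5
    exact (mul_eq_zero.mp h5).resolve_left hn2
  -- Step 2 : differentiability of the gradient components
  have hκC2 : ∀ x ∈ U, ContDiffAt ℝ 2 κ x := fun x hx =>
    (hκ x hx).contDiffAt (hU.mem_nhds hx)
  have hDκ : ∀ x ∈ U, DifferentiableAt ℝ (fderiv ℝ κ) x := fun x hx =>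
    ((hκC2 x hx).fderiv_right (m := 1) (by norm_num)).differentiableAt one_ne_zero
  have hGdiff : ∀ (ν : Fin n), ∀ x ∈ U,
      DifferentiableAt ℝ (fun y => fderiv ℝ κ y (Pi.single ν 1)) x := fun ν x hx =>
    (hDκ x hx).clm_apply (differentiableAt_const _)
  -- Step 3 : local constancy of the gradient and local affineness of κ
  have key : ∀ x ∈ U, ∃ ε > 0, Metric.ball x ε ⊆ U ∧
      ∀ y ∈ Metric.ball x ε, fderiv ℝ κ y = fderiv ℝ κ x ∧
        κ y = κ x + fderiv ℝ κ x y - fderiv ℝ κ x x := by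
    intro x hx
    obtain ⟨ε, hε, hball⟩ := Metric.isOpen_iff.mp hU x hx
    refine ⟨ε, hε, hball, fun y hy => ?_⟩
    have hconv : Convex ℝ (Metric.ball x ε) := convex_ball x ε
    have hopen : IsOpen (Metric.ball x ε) := Metric.isOpen_ball
    have hxball : x ∈ Metric.ball x ε := Metric.mem_ball_self hε
    -- each gradient component is constant on the ball
    have hgradconst : ∀ ν : Fin n,
        fderiv ℝ κ y (Pi.single ν 1) = fderiv ℝ κ x (Pi.single ν 1) := by
      intro ν
      refine hconv.is_const_of_fderivWithin_eq_zero
        (fun z hz => (hGdiff ν z (hball hz)).differentiableWithinAt)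
        (fun z hz => ?_) hy hxball
      rw [fderivWithin_of_isOpen hopen hz]
      refine clm_ext_single _ 0 fun μ => ?_
      rw [hHzero z (hball hz) μ ν]; simp
    have hgrad : fderiv ℝ κ y = fderiv ℝ κ x := clm_ext_single _ _ hgradconst
    refine ⟨hgrad, ?_⟩
    -- κ minus the fixed linear part is constant on the ball
    set L := fderiv ℝ κ x with hL
    have hconst : (fun z => κ z - L z) y = (fun z => κ z - L z) x := by
      refine hconv.is_const_of_fderivWithin_eq_zero
        (fun z hz => ((hκC2 z (hball hz)).differentiableAt
          (by norm_num)).differentiableWithinAt.sub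
          (L.differentiable.differentiableAt.differentiableWithinAt))
        (fun z hz => ?_) hy hxball
      rw [fderivWithin_of_isOpen hopen hz]
      have hdz : DifferentiableAt ℝ κ z := (hκC2 z (hball hz)).differentiableAt (by norm_num)
      rw [fderiv_sub hdz L.differentiable.differentiableAt, L.fderiv]
      -- fderiv κ z = L
      have hgz : fderiv ℝ κ z = L := by
        refine clm_ext_single _ _ fun ν => ?_
        refine hconv.is_const_of_fderivWithin_eq_zero
          (fun w hw => (hGdiff ν w (hball hw)).differentiableWithinAt)
          (fun w hw => ?_) hz hxball
        rw [fderivWithin_of_isOpen hopen hw]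
        refine clm_ext_single _ 0 fun μ => ?_
        rw [hHzero w (hball hw) μ ν]; simp
      rw [hgz, sub_self]
    simp only at hconst
    linarith [hconst]
  -- Step 4 : clopen argument on the connected set U
  obtain ⟨x₀, hx₀⟩ := hUconn.nonempty
  set L₀ := fderiv ℝ κ x₀ with hL₀
  set c₀ := κ x₀ - L₀ x₀ with hc₀
  set u : Set (Fin n → ℝ) :=
    {x | x ∈ U ∧ fderiv ℝ κ x = L₀ ∧ κ x = L₀ x + c₀} with hu
  set v : Set (Fin n → ℝ) :=
    {x | x ∈ U ∧ ¬(fderiv ℝ κ x = L₀ ∧ κ x = L₀ x + c₀)} with hv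
  have hu_open : IsOpen u := by
    rw [Metric.isOpen_iff]
    rintro x ⟨hxU, hgx, hκx⟩
    obtain ⟨ε, hε, hball, hloc⟩ := key x hxU
    refine ⟨ε, hε, fun y hy => ?_⟩
    obtain ⟨hg1, hκ1⟩ := hloc y hy
    refine ⟨hball hy, by rw [hg1, hgx], ?_⟩
    rw [hκ1, hgx, hκx]; ring
  have hv_open : IsOpen v := by
    rw [Metric.isOpen_iff]
    rintro x ⟨hxU, hnot⟩
    obtain ⟨ε, hε, hball, hloc⟩ := key x hxU
    refine ⟨ε, hε, fun y hy => ⟨hball hy, fun ⟨hg1, hκ1⟩ => hnot ?_⟩⟩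
    obtain ⟨hg2, hκ2⟩ := hloc y hy
    have hgx : fderiv ℝ κ x = L₀ := by rw [← hg2, hg1]
    refine ⟨hgx, ?_⟩
    have : κ y = κ x + fderiv ℝ κ x y - fderiv ℝ κ x x := hκ2
    rw [hgx] at this
    have := hκ1
    rw [‹κ y = κ x + L₀ y - L₀ x›] at this
    linarith
  have hdisj : Disjoint u v := by
    rw [Set.disjoint_left]
    rintro x ⟨_, hx2⟩ ⟨_, hx3⟩
    exact hx3 hx2
  have hsub : U ⊆ u ∪ v := fun x hx => by
    by_cases h : fderiv ℝ κ x = L₀ ∧ κ x = L₀ x + c₀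
    · exact Or.inl ⟨hx, h⟩
    · exact Or.inr ⟨hx, h⟩
  have hne : (U ∩ u).Nonempty := ⟨x₀, hx₀, hx₀, rfl, by rw [hc₀]; ring⟩
  have hUu : U ⊆ u :=
    hUconn.isPreconnected.subset_left_of_subset_union hu_open hv_open hdisj hsub hne
  -- Step 5 : conclusion
  refine ⟨fun ν => L₀ (Pi.single ν 1), c₀, fun x hx => ?_⟩
  obtain ⟨_, _, hκx⟩ := hUu hx
  rw [hκx]
  congr 1
  have := LinearMap.pi_apply_eq_sum_univ (L₀ : (Fin n → ℝ) →ₗ[ℝ] ℝ) x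
  simp only [ContinuousLinearMap.coe_coe] at this
  rw [this]
  refine Finset.sum_congr rfl fun ν _ => ?_
  have hsingle : (fun j => if ν = j then (1:ℝ) else 0) = Pi.single ν 1 := by
    funext j; simp [Pi.single_apply, eq_comm]
  rw [hsingle, smul_eq_mul, mul_comm]
end

section
/- If a smooth vector field X on an open connected subset of ℝ^n (n ≥ 2, flat metric g of signature (p,q)) satisfies the Killing equation ∂_ν X_μ + ∂_μ X_ν = 0, then X is affine: there exist constants ω^μ_ν and c^μ with ω antisymmetric (with respect to g) such that X^μ(x) = ω^μ_ν x^ν + c^μ. -/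
open Filter Topology Metric

section helpers
variable {n : ℕ}

private lemma clm_apply_eq_sum (f : (Fin n → ℝ) →L[ℝ] ℝ) (w : Fin n → ℝ) :
    f w = ∑ ρ, w ρ * f (Pi.single ρ 1) := by
  have hw : w = ∑ ρ, w ρ • (Pi.single ρ 1 : Fin n → ℝ) := by
    conv_lhs => rw [pi_eq_sum_univ w]
    refine Finset.sum_congr rfl fun ρ _ => ?_
    congr 1
    funext j
    simp [Pi.single_apply, eq_comm]
  conv_lhs => rw [hw, map_sum]
  simp [smul_eq_mul]

private lemma const_on_of_hasFDerivAt_zero {U : Set (Fin n → ℝ)} (hU : IsOpen U)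
    (hconn : IsPreconnected U) {f : (Fin n → ℝ) → ℝ}
    (hd : ∀ x ∈ U, HasFDerivAt f (0 : (Fin n → ℝ) →L[ℝ] ℝ) x) :
    ∀ x ∈ U, ∀ y ∈ U, f x = f y := by
  haveI : PreconnectedSpace U := Subtype.preconnectedSpace hconn
  have hloc : IsLocallyConstant (fun x : U => f x) := by
    rw [IsLocallyConstant.iff_exists_open]
    rintro ⟨x, hx⟩
    obtain ⟨ε, hε, hball⟩ := Metric.isOpen_iff.1 hU x hx
    refine ⟨Subtype.val ⁻¹' Metric.ball x ε,
      (Metric.isOpen_ball).preimage continuous_subtype_val, Metric.mem_ball_self hε, ?_⟩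
    rintro ⟨y, hy⟩ hyb
    have hconv : Convex ℝ (Metric.ball x ε) := convex_ball x ε
    have hdiff : DifferentiableOn ℝ f (Metric.ball x ε) := fun z hz =>
      ((hd z (hball hz)).differentiableAt).differentiableWithinAt
    have hzero : ∀ z ∈ Metric.ball x ε, fderivWithin ℝ f (Metric.ball x ε) z = 0 := by
      intro z hz
      rw [fderivWithin_of_isOpen Metric.isOpen_ball hz]
      exact (hd z (hball hz)).fderiv
    exact hconv.is_const_of_fderivWithin_eq_zero hdiff hzero hyb (Metric.mem_ball_self hε)
  intro x hx y hy
  exact hloc.apply_eq_of_preconnectedSpace ⟨x, hx⟩ ⟨y, hy⟩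

end helpers

/-- A smooth vector field on an open connected subset of ℝ^n (n ≥ 2,
flat metric of signature (p,q)) satisfying the Killing equation
∂_ν X_μ + ∂_μ X_ν = 0 is affine, X^μ(x) = ω^μ_ν x^ν + c^μ, with ω antisymmetric
with respect to g (i.e. ω_{μν} = −ω_{νμ}). -/
theorem killing_field_affine
    (p q n : ℕ) (hn : n = p + q) (hdim : 2 ≤ n)
    (U : Set (Fin n → ℝ)) (hU : IsOpen U) (hUconn : IsConnected U)
    (g : Fin n → ℝ) (hg : ∀ μ, g μ = if (μ : ℕ) < p then (1 : ℝ) else -1)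
    (X : (Fin n → ℝ) → (Fin n → ℝ)) (hX : ContDiffOn ℝ (⊤ : ℕ∞) X U)
    (hKill : ∀ x ∈ U, ∀ μ ν : Fin n,
      g μ * fderiv ℝ (fun y => X y μ) x (Pi.single ν 1)
        + g ν * fderiv ℝ (fun y => X y ν) x (Pi.single μ 1) = 0) :
    ∃ (ω : Fin n → Fin n → ℝ) (c : Fin n → ℝ),
      (∀ μ ν, g μ * ω μ ν = -(g ν * ω ν μ)) ∧
      ∀ x ∈ U, ∀ μ, X x μ = (∑ ν, ω μ ν * x ν) + c μ := by
  classical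
  have hgsq : ∀ μ, g μ * g μ = 1 := by intro μ; rw [hg]; split <;> norm_num
  have hXc : ∀ μ : Fin n, ContDiffOn ℝ (⊤ : ℕ∞) (fun y => X y μ) U := fun μ =>
    (ContinuousLinearMap.proj μ : ((Fin n) → ℝ) →L[ℝ] ℝ).contDiff.comp_contDiffOn hX
  set D : Fin n → (Fin n → ℝ) → (Fin n → ℝ) →L[ℝ] ℝ :=
    fun μ x => fderiv ℝ (fun y => X y μ) x with hDdef
  have hDc : ∀ μ, ContDiffOn ℝ (⊤ : ℕ∞) (D μ) U := fun μ =>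
    (hXc μ).fderiv_of_isOpen hU le_rfl
  have hDf : ∀ μ, ∀ x ∈ U, HasFDerivAt (fun y => X y μ) (D μ x) x := fun μ x hx =>
    (((hXc μ).contDiffAt (hU.mem_nhds hx)).differentiableAt (by simp)).hasFDerivAt
  set Dd : Fin n → (Fin n → ℝ) → (Fin n → ℝ) →L[ℝ] (Fin n → ℝ) →L[ℝ] ℝ :=
    fun μ x => fderiv ℝ (D μ) x with hDddef
  have hDdf : ∀ μ, ∀ x ∈ U, HasFDerivAt (D μ) (Dd μ x) x := fun μ x hx =>
    (((hDc μ).contDiffAt (hU.mem_nhds hx)).differentiableAt (by simp)).hasFDerivAt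
  -- Clairaut : second derivative symmetric
  have hsym : ∀ μ, ∀ x ∈ U, ∀ v w, Dd μ x v w = Dd μ x w v := by
    intro μ x hx v w
    have hev : ∀ᶠ y in 𝓝 x, HasFDerivAt (fun y => X y μ) (D μ y) y := by
      filter_upwards [hU.mem_nhds hx] with y hy using hDf μ y hy
    exact second_derivative_symmetric_of_eventually hev (hDdf μ x hx) v w
  -- derivative of the Killing identity
  have hKd : ∀ x ∈ U, ∀ μ ν ρ : Fin n,
      g μ * Dd μ x (Pi.single ρ 1) (Pi.single ν 1)
        + g ν * Dd ν x (Pi.single ρ 1) (Pi.single μ 1) = 0 := by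
    intro x hx μ ν ρ
    have h1 : HasFDerivAt (fun y => D μ y (Pi.single ν 1))
        ((ContinuousLinearMap.apply ℝ ℝ (Pi.single ν 1)).comp (Dd μ x)) x := by
      exact (ContinuousLinearMap.apply ℝ ℝ (Pi.single ν 1)).hasFDerivAt.comp x (hDdf μ x hx)
    have h2 : HasFDerivAt (fun y => D ν y (Pi.single μ 1))
        ((ContinuousLinearMap.apply ℝ ℝ (Pi.single μ 1)).comp (Dd ν x)) x := by
      exact (ContinuousLinearMap.apply ℝ ℝ (Pi.single μ 1)).hasFDerivAt.comp x (hDdf ν x hx)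
    have hF : HasFDerivAt (fun y => g μ * D μ y (Pi.single ν 1) + g ν * D ν y (Pi.single μ 1))
        (g μ • ((ContinuousLinearMap.apply ℝ ℝ (Pi.single ν 1)).comp (Dd μ x))
          + g ν • ((ContinuousLinearMap.apply ℝ ℝ (Pi.single μ 1)).comp (Dd ν x))) x :=
      (h1.const_mul (g μ)).add (h2.const_mul (g ν))
    have hF0 : (fun y => g μ * D μ y (Pi.single ν 1) + g ν * D ν y (Pi.single μ 1))
        =ᶠ[𝓝 x] fun _ => (0 : ℝ) := by
      filter_upwards [hU.mem_nhds hx] with y hy using hKill y hy μ ν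
    have hzero : HasFDerivAt
        (fun y => g μ * D μ y (Pi.single ν 1) + g ν * D ν y (Pi.single μ 1))
        (0 : (Fin n → ℝ) →L[ℝ] ℝ) x :=
      (hasFDerivAt_const (0 : ℝ) x).congr_of_eventuallyEq hF0
    have huniq := hF.unique hzero
    have := congrArg (fun (L : (Fin n → ℝ) →L[ℝ] ℝ) => L (Pi.single ρ 1)) huniq
    simpa [ContinuousLinearMap.comp_apply, ContinuousLinearMap.apply_apply,
      smul_eq_mul] using this
  -- the second derivative vanishes
  have hDd0 : ∀ μ, ∀ x ∈ U, ∀ ν ρ : Fin n, Dd μ x (Pi.single ν 1) (Pi.single ρ 1) = 0 := by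
    intro μ x hx ν ρ
    have h1 := hKd x hx μ ρ ν
    have h2 := hKd x hx ρ ν μ
    have h3 := hKd x hx ν μ ρ
    rw [hsym ρ x hx (Pi.single ν 1) (Pi.single μ 1)] at h1
    rw [hsym ν x hx (Pi.single ρ 1) (Pi.single μ 1),
      hsym μ x hx (Pi.single ρ 1) (Pi.single ν 1)] at h3
    have hA : g μ * Dd μ x (Pi.single ν 1) (Pi.single ρ 1) = 0 := by linarith
    have : Dd μ x (Pi.single ν 1) (Pi.single ρ 1)
        = g μ * (g μ * Dd μ x (Pi.single ν 1) (Pi.single ρ 1)) := by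
      rw [← mul_assoc, hgsq, one_mul]
    rw [this, hA, mul_zero]
  obtain ⟨x₀, hx₀⟩ := hUconn.nonempty
  set ω : Fin n → Fin n → ℝ := fun μ ν => D μ x₀ (Pi.single ν 1) with hω
  -- the first derivative is constant on U
  have hAconst : ∀ μ ν, ∀ x ∈ U, D μ x (Pi.single ν 1) = ω μ ν := by
    intro μ ν x hx
    have hder : ∀ z ∈ U, HasFDerivAt (fun y => D μ y (Pi.single ν 1))
        (0 : (Fin n → ℝ) →L[ℝ] ℝ) z := by
      intro z hz
      have h1 : HasFDerivAt (fun y => D μ y (Pi.single ν 1))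
          ((ContinuousLinearMap.apply ℝ ℝ (Pi.single ν 1)).comp (Dd μ z)) z := by
        exact (ContinuousLinearMap.apply ℝ ℝ (Pi.single ν 1)).hasFDerivAt.comp z (hDdf μ z hz)
      have hC : ((ContinuousLinearMap.apply ℝ ℝ (Pi.single ν 1)).comp (Dd μ z))
          = (0 : (Fin n → ℝ) →L[ℝ] ℝ) := by
        ext w
        have hw := clm_apply_eq_sum ((Dd μ z).flip (Pi.single ν 1)) w
        simp only [ContinuousLinearMap.flip_apply] at hw
        simp only [ContinuousLinearMap.comp_apply, ContinuousLinearMap.apply_apply,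
          ContinuousLinearMap.zero_apply]
        rw [hw]
        refine Finset.sum_eq_zero fun ρ _ => ?_
        rw [hDd0 μ z hz ρ ν, mul_zero]
      rwa [hC] at h1
    exact const_on_of_hasFDerivAt_zero hU hUconn.isPreconnected hder x hx x₀ hx₀
  refine ⟨ω, fun μ => X x₀ μ - ∑ ν, ω μ ν * x₀ ν, ?_, ?_⟩
  · intro μ ν
    have h := hKill x₀ hx₀ μ ν
    have h1 : g μ * ω μ ν + g ν * ω ν μ = 0 := h
    linarith
  · intro x hx μ
    have hder : ∀ z ∈ U, HasFDerivAt (fun y => X y μ - ∑ ν, ω μ ν * y ν)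
        (0 : (Fin n → ℝ) →L[ℝ] ℝ) z := by
      intro z hz
      have hlin : HasFDerivAt (fun y : Fin n → ℝ => ∑ ν, ω μ ν * y ν)
          (∑ ν, ω μ ν • (ContinuousLinearMap.proj ν : (Fin n → ℝ) →L[ℝ] ℝ)) z := by
        refine HasFDerivAt.fun_sum fun ν _ => ?_
        exact ((ContinuousLinearMap.proj ν : (Fin n → ℝ) →L[ℝ] ℝ).hasFDerivAt).const_mul (ω μ ν)
      have hY := (hDf μ z hz).sub hlin
      have hC : D μ z - (∑ ν, ω μ ν • (ContinuousLinearMap.proj ν : (Fin n → ℝ) →L[ℝ] ℝ))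
          = (0 : (Fin n → ℝ) →L[ℝ] ℝ) := by
        ext w
        simp only [ContinuousLinearMap.sub_apply, ContinuousLinearMap.sum_apply,
          ContinuousLinearMap.smul_apply, ContinuousLinearMap.proj_apply,
          ContinuousLinearMap.zero_apply, smul_eq_mul]
        rw [clm_apply_eq_sum (D μ z) w]
        rw [sub_eq_zero]
        refine Finset.sum_congr rfl fun ν _ => ?_
        rw [hAconst μ ν z hz, mul_comm]
      rwa [hC] at hY
    have := const_on_of_hasFDerivAt_zero hU hUconn.isPreconnected hder x hx x₀ hx₀
    show X x μ = (∑ ν, ω μ ν * x ν) + (X x₀ μ - ∑ ν, ω μ ν * x₀ ν)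
    linarith
end
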